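/- Let d ≥ 1, K ≥ 0, and let φ : ℝ^d → ℝ be K-Lipschitz. Then for every ε > 0 and t > 0, the Cole–Hopf function u^ε_t is K-Lipschitz: |u^ε_t(x) − u^ε_t(z)| ≤ K‖x − z‖ for all x, z ∈ ℝ^d. -/

import Mathlib

open MeasureTheory
noncomputable section

/-- The Cole–Hopf function. -/
def coleHopf {d : ℕ} (φ : EuclideanSpace ℝ (Fin d) → ℝ) (ε t : ℝ)
    (x : EuclideanSpace ℝ (Fin d)) : ℝ :=
  -ε * Real.log ((2 * Real.pi * ε * t) ^ (-(d : ℝ) / 2) *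
    ∫ y : EuclideanSpace ℝ (Fin d),
      Real.exp (-‖x - y‖ ^ 2 / (2 * ε * t) - φ y / ε))

private lemma coleHopf_integrable {d : ℕ} {K : ℝ} (hK : 0 ≤ K)
    {φ : EuclideanSpace ℝ (Fin d) → ℝ}
    (hLip : ∀ y z, |φ y - φ z| ≤ K * ‖y - z‖)
    {ε : ℝ} (hε : 0 < ε) {t : ℝ} (ht : 0 < t)
    (x : EuclideanSpace ℝ (Fin d)) :
    Integrable (fun y : EuclideanSpace ℝ (Fin d) =>
      Real.exp (-‖x - y‖ ^ 2 / (2 * ε * t) - φ y / ε)) := by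
  have hφcont : Continuous φ := by
    have : LipschitzWith K.toNNReal φ := by
      apply LipschitzWith.of_dist_le_mul
      intro a b
      rw [Real.coe_toNNReal K hK, Real.dist_eq, dist_eq_norm]
      exact hLip a b
    exact this.continuous
  have hcont : Continuous (fun y : EuclideanSpace ℝ (Fin d) =>
      Real.exp (-‖x - y‖ ^ 2 / (2 * ε * t) - φ y / ε)) := by
    apply Real.continuous_exp.comp
    apply Continuous.sub
    · exact ((continuous_const.sub continuous_id).norm.pow 2).neg.div_const _
    · exact hφcont.div_const _
  set a : ℝ := (2 * ε * t)⁻¹ with ha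
  have ha0 : 0 < a := by positivity
  set c : ℝ := K / ε with hc
  set B : ℝ := c ^ 2 / (2 * a) - φ x / ε with hB
  have hdom : Integrable (fun y : EuclideanSpace ℝ (Fin d) =>
      Real.exp B * Real.exp (-(a / 2) * ‖x - y‖ ^ 2)) := by
    apply Integrable.const_mul
    have h0 : Integrable (fun v : EuclideanSpace ℝ (Fin d) =>
        Real.exp (-(a / 2) * ‖v‖ ^ 2)) := by
      have := GaussianFourier.integrable_cexp_neg_mul_sq_norm_add (V := EuclideanSpace ℝ (Fin d))
        (b := ((a / 2 : ℝ) : ℂ)) (by simpa using half_pos ha0) 0 0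
      simp only [zero_mul, add_zero] at this
      have h2 := this.re
      convert h2 using 2 with v
      have hcast : (-(↑(a / 2) : ℂ)) * (↑‖v‖ : ℂ) ^ 2 = ((-(a / 2) * ‖v‖ ^ 2 : ℝ) : ℂ) := by
        push_cast; ring
      rw [hcast, ← Complex.ofReal_exp]
      exact (RCLike.ofReal_re _).symm
    have := h0.comp_sub_left x
    simpa using this
  apply Integrable.mono' hdom hcont.aestronglyMeasurable
  filter_upwards with y
  rw [Real.norm_eq_abs, abs_of_pos (Real.exp_pos _), ← Real.exp_add, Real.exp_le_exp]
  have h1 : φ x - φ y ≤ K * ‖x - y‖ := le_trans (le_abs_self _) (hLip x y)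
  have h2 : -‖x - y‖ ^ 2 / (2 * ε * t) = -a * ‖x - y‖ ^ 2 := by
    rw [ha]; field_simp
  rw [h2, hB]
  clear_value a c
  have hr : (0:ℝ) ≤ ‖x - y‖ := norm_nonneg _
  have h3 : -φ y / ε ≤ c * ‖x - y‖ - φ x / ε := by
    have hnum : -φ y ≤ K * ‖x - y‖ - φ x := by linarith
    calc -φ y / ε ≤ (K * ‖x - y‖ - φ x) / ε := by gcongr
      _ = c * ‖x - y‖ - φ x / ε := by rw [hc]; field_simp
  have h4 : -a * ‖x - y‖ ^ 2 + c * ‖x - y‖ ≤ -(a / 2) * ‖x - y‖ ^ 2 + c ^ 2 / (2 * a) := by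
    have hkey : 0 ≤ (a / 2) * (‖x - y‖ - c / a) ^ 2 := by positivity
    have hexp : (a / 2) * (‖x - y‖ - c / a) ^ 2
        = (a/2) * ‖x - y‖ ^ 2 - c * ‖x - y‖ + c ^ 2 / (2 * a) := by
      field_simp
      ring
    nlinarith
  have hsum : -a * ‖x - y‖ ^ 2 - φ y / ε
      - (c ^ 2 / (2 * a) - φ x / ε + -(a / 2) * ‖x - y‖ ^ 2)
      = (-φ y / ε - (c * ‖x - y‖ - φ x / ε))
        + ((-a * ‖x - y‖ ^ 2 + c * ‖x - y‖)
          - (-(a / 2) * ‖x - y‖ ^ 2 + c ^ 2 / (2 * a))) := by ring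
  linarith [h3, h4, hsum]

theorem stmt3 (d : ℕ) (hd : 1 ≤ d) (K : ℝ) (hK : 0 ≤ K)
    (φ : EuclideanSpace ℝ (Fin d) → ℝ)
    (hLip : ∀ y z, |φ y - φ z| ≤ K * ‖y - z‖)
    (ε : ℝ) (hε : 0 < ε) (t : ℝ) (ht : 0 < t) :
    ∀ x z : EuclideanSpace ℝ (Fin d),
      |coleHopf φ ε t x - coleHopf φ ε t z| ≤ K * ‖x - z‖ := by
  set f : EuclideanSpace ℝ (Fin d) → EuclideanSpace ℝ (Fin d) → ℝ := fun x y => Real.exp (-‖x - y‖ ^ 2 / (2 * ε * t) - φ y / ε) with hf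
  have hInt : ∀ x : EuclideanSpace ℝ (Fin d), Integrable (f x) := fun x =>
    coleHopf_integrable hK hLip hε ht x
  -- positivity of the integral
  have hIpos : ∀ x : EuclideanSpace ℝ (Fin d), 0 < ∫ y, f x y := by
    intro x
    rw [integral_pos_iff_support_of_nonneg (fun y => (Real.exp_pos _).le) (hInt x)]
    have : Function.support (f x) = Set.univ := by
      ext y; simp [hf, (Real.exp_pos _).ne']
    rw [this]
    exact isOpen_univ.measure_pos volume Set.univ_nonempty
  -- the key translation inequality
  have key : ∀ x z : EuclideanSpace ℝ (Fin d),
      Real.exp (-(K * ‖x - z‖) / ε) * ∫ y, f z y ≤ ∫ y, f x y := by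
    intro x z
    have htrans : (∫ y, f x y) = ∫ w, f x (w + (x - z)) := by
      exact (integral_add_right_eq_self (μ := volume) (f x) (x - z)).symm
    rw [htrans, ← integral_const_mul]
    apply integral_mono
    · exact ((hInt z).const_mul _)
    · exact (hInt x).comp_add_right (x - z)
    intro w
    simp only [hf, ← Real.exp_add, Real.exp_le_exp]
    have hxw : x - (w + (x - z)) = z - w := by abel
    rw [hxw]
    have hφ : φ (w + (x - z)) - φ w ≤ K * ‖x - z‖ := by
      have := hLip (w + (x - z)) w
      have h2 : w + (x - z) - w = x - z := by abel
      rw [h2] at this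
      exact le_trans (le_abs_self _) this
    have : -(φ (w + (x - z))) / ε ≥ -(K * ‖x - z‖) / ε + -(φ w) / ε := by
      rw [ge_iff_le, ← add_div, div_le_div_iff_of_pos_right hε]
      linarith
    have hrw : -‖z - w‖ ^ 2 / (2 * ε * t) - φ (w + (x - z)) / ε
        = -‖z - w‖ ^ 2 / (2 * ε * t) + (-(φ (w + (x - z))) / ε) := by ring
    rw [hrw]
    have : -(K * ‖x - z‖) / ε + (-‖z - w‖ ^ 2 / (2 * ε * t) - φ w / ε)
        = -‖z - w‖ ^ 2 / (2 * ε * t) + (-(K * ‖x - z‖) / ε + -(φ w) / ε) := by ring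
    rw [this]
    gcongr
  -- reduce to a one-sided bound
  have oneSided : ∀ x z : EuclideanSpace ℝ (Fin d), coleHopf φ ε t x - coleHopf φ ε t z ≤ K * ‖x - z‖ := by
    intro x z
    set C : ℝ := (2 * Real.pi * ε * t) ^ (-(d : ℝ) / 2) with hC
    have hCpos : 0 < C := by
      apply Real.rpow_pos_of_pos
      positivity
    have hIx := hIpos x
    have hIz := hIpos z
    have hu : ∀ w : EuclideanSpace ℝ (Fin d), coleHopf φ ε t w = -ε * (Real.log C + Real.log (∫ y, f w y)) := by
      intro w
      rw [coleHopf, Real.log_mul hCpos.ne' (hIpos w).ne']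
    rw [hu x, hu z]
    have hlog : Real.log (∫ y, f z y) - Real.log (∫ y, f x y) ≤ K * ‖x - z‖ / ε := by
      have h1 : Real.log (Real.exp (-(K * ‖x - z‖) / ε) * ∫ y, f z y)
          ≤ Real.log (∫ y, f x y) :=
        Real.log_le_log (by positivity) (key x z)
      rw [Real.log_mul (Real.exp_pos _).ne' hIz.ne', Real.log_exp] at h1
      have : -(K * ‖x - z‖) / ε = -(K * ‖x - z‖ / ε) := by ring
      rw [this] at h1
      linarith
    have hε' : ε ≠ 0 := hε.ne'
    have : -ε * (Real.log C + Real.log (∫ y, f x y))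
        - -ε * (Real.log C + Real.log (∫ y, f z y))
        = ε * (Real.log (∫ y, f z y) - Real.log (∫ y, f x y)) := by ring
    rw [this]
    calc ε * (Real.log (∫ y, f z y) - Real.log (∫ y, f x y))
        ≤ ε * (K * ‖x - z‖ / ε) := by
          exact mul_le_mul_of_nonneg_left hlog hε.le
      _ = K * ‖x - z‖ := by field_simp
  intro x z
  rw [abs_sub_le_iff]
  constructor
  · exact oneSided x z
  · have := oneSided z x
    rwa [norm_sub_rev] at this
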